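/- If c > 0, then 0 < P(X < μ) < 1 and E[X | X ≥ μ] − E[X | X < μ] ≥ c/2, where the conditional expectation is E[X | A] = E[X·1_A]/P(A). -/

import Mathlib

open MeasureTheory ProbabilityTheory

/-- Let `X` be a random variable taking values in `[0,1]`, with mean `μ = E[X]` and
variance `c = Var(X)`.  If `c > 0` then `0 < P(X < μ) < 1` and
`E[X | X ≥ μ] − E[X | X < μ] ≥ c/2`, where `E[X | A] = E[X·1_A]/P(A)`. -/
theorem conditional_mean_gap_of_positive_variance
    {Ω : Type} [MeasurableSpace Ω] (P : Measure Ω) [IsProbabilityMeasure P]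
    (X : Ω → ℝ) (hX : Measurable X)
    (hrange : ∀ ω, X ω ∈ Set.Icc (0 : ℝ) 1)
    (hc : 0 < variance X P) :
    (0 < (P {ω | X ω < ∫ ω', X ω' ∂P}).toReal ∧
      (P {ω | X ω < ∫ ω', X ω' ∂P}).toReal < 1) ∧
    variance X P / 2 ≤
      (∫ ω in {ω | ∫ ω', X ω' ∂P ≤ X ω}, X ω ∂P) /
          (P {ω | ∫ ω', X ω' ∂P ≤ X ω}).toReal -
        (∫ ω in {ω | X ω < ∫ ω', X ω' ∂P}, X ω ∂P) /
          (P {ω | X ω < ∫ ω', X ω' ∂P}).toReal := by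
  set μ := ∫ ω', X ω' ∂P with hμdef
  set A := {ω | X ω < μ} with hAdef
  have hAm : MeasurableSet A := measurableSet_lt hX measurable_const
  have hAc : {ω | μ ≤ X ω} = Aᶜ := by
    ext ω; simp [hAdef, not_lt]
  -- boundedness and integrability
  have hXb : ∀ ω, ‖X ω‖ ≤ 1 := fun ω => by
    rw [Real.norm_eq_abs]; exact abs_le.2 ⟨by linarith [(hrange ω).1], (hrange ω).2⟩
  have hmem2 : MemLp X 2 P :=
    MemLp.of_bound hX.aestronglyMeasurable 1 (Filter.Eventually.of_forall hXb)
  have hint : Integrable X P :=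
    memLp_one_iff_integrable.mp
      (MemLp.of_bound hX.aestronglyMeasurable 1 (Filter.Eventually.of_forall hXb))
  have hμ0 : 0 ≤ μ := integral_nonneg fun ω => (hrange ω).1
  have hμ1 : μ ≤ 1 := by
    calc μ ≤ ∫ _ω, (1 : ℝ) ∂P := integral_mono hint (integrable_const 1) fun ω => (hrange ω).2
    _ = 1 := by simp
  have habs1 : ∀ ω, |X ω - μ| ≤ 1 := fun ω =>
    abs_le.2 ⟨by linarith [(hrange ω).1], by linarith [(hrange ω).2]⟩
  have hintsub : Integrable (fun ω => X ω - μ) P := hint.sub (integrable_const μ)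
  have hintabs : Integrable (fun ω => |X ω - μ|) P := hintsub.abs
  have hintsq : Integrable (fun ω => (X ω - μ) ^ 2) P := by
    refine memLp_one_iff_integrable.mp
      (MemLp.of_bound ((hX.sub measurable_const).pow_const 2).aestronglyMeasurable 1
        (Filter.Eventually.of_forall fun ω => ?_))
    rw [Real.norm_eq_abs, abs_pow]
    nlinarith [habs1 ω, abs_nonneg (X ω - μ)]
  -- d := ∫_A (μ - X)
  set d := ∫ ω in A, (μ - X ω) ∂P with hddef
  have hsub0 : ∫ ω, (X ω - μ) ∂P = 0 := by
    rw [integral_sub hint (integrable_const μ), integral_const]; simp [hμdef]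
  have hAint : ∫ ω in A, (X ω - μ) ∂P = -d := by
    rw [hddef, ← integral_neg]; simp [neg_sub]
  have hsplit : (∫ ω in A, (X ω - μ) ∂P) + ∫ ω in Aᶜ, (X ω - μ) ∂P = 0 := by
    rw [integral_add_compl hAm hintsub, hsub0]
  have hBint : ∫ ω in Aᶜ, (X ω - μ) ∂P = d := by linarith [hsplit, hAint]
  have hd0 : 0 ≤ d :=
    setIntegral_nonneg hAm fun ω hω => by
      have : X ω < μ := hω; linarith
  -- ∫ |X - μ| = 2 d
  have habs : ∫ ω, |X ω - μ| ∂P = 2 * d := by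
    rw [← integral_add_compl hAm hintabs]
    have h1 : ∫ ω in A, |X ω - μ| ∂P = d := by
      rw [hddef]
      refine setIntegral_congr_fun hAm fun ω hω => ?_
      have : X ω < μ := hω
      rw [abs_of_neg (by linarith)]; ring
    have h2 : ∫ ω in Aᶜ, |X ω - μ| ∂P = d := by
      rw [← hBint]
      refine setIntegral_congr_fun hAm.compl fun ω hω => ?_
      have : μ ≤ X ω := not_lt.mp hω
      rw [abs_of_nonneg (by linarith)]
    rw [h1, h2]; ring
  have hvar : variance X P = ∫ ω, (X ω - μ) ^ 2 ∂P := by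
    rw [variance_eq_integral hX.aemeasurable]
  have hvarle : variance X P ≤ 2 * d := by
    rw [hvar, ← habs]
    refine integral_mono hintsq hintabs fun ω => ?_
    have := habs1 ω
    nlinarith [abs_nonneg (X ω - μ), sq_abs (X ω - μ)]
  have hd : variance X P / 2 ≤ d := by linarith
  have hdpos : 0 < d := by linarith
  -- positivity of the two probabilities
  have hPA : P A ≠ 0 := by
    intro h
    have : d = 0 := by
      rw [hddef, Measure.restrict_eq_zero.mpr h, integral_zero_measure]
    linarith
  have hPB : P Aᶜ ≠ 0 := by
    intro h
    have : d = 0 := by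
      rw [← hBint, Measure.restrict_eq_zero.mpr h, integral_zero_measure]
    linarith
  set p := (P A).toReal with hpdef
  set q := (P Aᶜ).toReal with hqdef
  have hp0 : 0 < p := ENNReal.toReal_pos hPA (measure_ne_top P A)
  have hq0 : 0 < q := ENNReal.toReal_pos hPB (measure_ne_top P Aᶜ)
  have hpq : p + q = 1 := by
    rw [hpdef, hqdef, ← ENNReal.toReal_add (measure_ne_top P A) (measure_ne_top P Aᶜ),
      measure_add_measure_compl hAm]
    simp
  have hp1 : p < 1 := by linarith
  -- compute the conditional expectations' numerators
  have hBX : ∫ ω in Aᶜ, X ω ∂P = d + μ * q := by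
    have := hBint
    rw [integral_sub (hint.restrict) (integrable_const μ), integral_const] at this
    simp only [Measure.real, Measure.restrict_apply_univ, smul_eq_mul] at this
    rw [← hqdef] at this
    linarith
  have hAX : ∫ ω in A, X ω ∂P = μ * p - d := by
    have := hAint
    rw [integral_sub (hint.restrict) (integrable_const μ), integral_const] at this
    simp only [Measure.real, Measure.restrict_apply_univ, smul_eq_mul] at this
    rw [← hpdef] at this
    linarith
  rw [hAc]
  refine ⟨⟨hp0, hp1⟩, ?_⟩
  rw [hBX, hAX]
  simp only [← hpdef, ← hqdef]
  have hkey : (d + μ * q) / q - (μ * p - d) / p = d / q + d / p := by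
    field_simp; ring
  rw [hkey]
  have h1 : d ≤ d / p := by
    rw [le_div_iff₀ hp0]; nlinarith
  have h2 : 0 ≤ d / q := by positivity
  linarith
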